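/- arXiv:math/0503313 — 3 statements merged into one kernel-verified Lean document; each statement's English description precedes it below -/
import Mathlib

section
/- For a closed C² curve γ in the Euclidean plane parametrized by arclength s, with position vector R, unit tangent T, outward normal N, geodesic curvature κ_g, and polar coordinates (ρ, θ), the total length of γ equals the integral over γ of ρ²·κ_g dθ. -/
/-- **Polar Minkowski formula in the Euclidean plane** (Theorem 2.1, case `k = 0`).
For a closed `C²` curve `γ` in `ℝ²` of period `L`, parametrized by arclength,
with signed geodesic curvature `κ` (with respect to the outward normal, so that
`T' = κ • J T` where `J` is rotation by 90° counterclockwise), and polar angle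
function `θ` satisfying `ρ² θ' = x y' - y x'`, the total length `L` of the curve
equals `∫ ρ² κ dθ`. -/
theorem minkowski_polar_formula_euclidean
    (L : ℝ) (hL : 0 < L) (γ : ℝ → ℝ × ℝ) (κ θ : ℝ → ℝ)
    (hC2 : ContDiff ℝ 2 γ)
    (hper : ∀ s, γ (s + L) = γ s)
    (hunit : ∀ s, (deriv γ s).1 ^ 2 + (deriv γ s).2 ^ 2 = 1)
    (hcurv : ∀ s, deriv (deriv γ) s = κ s • (-(deriv γ s).2, (deriv γ s).1))
    (hκ : Continuous κ)
    (hθ : ∀ s, ((γ s).1 ^ 2 + (γ s).2 ^ 2) * deriv θ s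
        = (γ s).1 * deriv (fun u => (γ u).2) s - (γ s).2 * deriv (fun u => (γ u).1) s)
    (hθ' : Continuous (deriv θ)) :
    L = ∫ s in (0:ℝ)..L, ((γ s).1 ^ 2 + (γ s).2 ^ 2) * κ s * deriv θ s := by
  have hdγ : Differentiable ℝ γ := hC2.differentiable (by norm_num)
  have h2 : ContDiff ℝ ((1 : ℕ∞) + 1) γ := by
    convert hC2 using 2
    norm_num
  have hdγ' : Differentiable ℝ (deriv γ) :=
    ((contDiff_succ_iff_deriv (n := 1)).mp h2).2.2.differentiable one_ne_zero
  set F : ℝ → ℝ := fun s => (γ s).1 * (deriv γ s).1 + (γ s).2 * (deriv γ s).2 with hFdef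
  have hF : ∀ s : ℝ, HasDerivAt F
      (1 + κ s * ((γ s).2 * (deriv γ s).1 - (γ s).1 * (deriv γ s).2)) s := by
    intro s
    have h1 : HasDerivAt γ (deriv γ s) s := (hdγ s).hasDerivAt
    have h2' : HasDerivAt (deriv γ) (deriv (deriv γ) s) s := (hdγ' s).hasDerivAt
    have hx : HasDerivAt (fun u => (γ u).1) ((deriv γ s).1) s := h1.fst
    have hy : HasDerivAt (fun u => (γ u).2) ((deriv γ s).2) s := h1.snd
    have hx' : HasDerivAt (fun u => (deriv γ u).1) ((deriv (deriv γ) s).1) s := h2'.fst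
    have hy' : HasDerivAt (fun u => (deriv γ u).2) ((deriv (deriv γ) s).2) s := h2'.snd
    have := (hx.mul hx').add (hy.mul hy')
    refine this.congr_deriv ?_
    rw [hcurv s]
    have hu := hunit s
    simp only [Prod.smul_fst, Prod.smul_snd, smul_eq_mul]
    nlinarith [hu]
  have hγcont : Continuous γ := hdγ.continuous
  have hγ'cont : Continuous (deriv γ) := hdγ'.continuous
  have hFcont : Continuous fun s =>
      1 + κ s * ((γ s).2 * (deriv γ s).1 - (γ s).1 * (deriv γ s).2) := by
    fun_prop
  have hint : (∫ s in (0:ℝ)..L,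
      (1 + κ s * ((γ s).2 * (deriv γ s).1 - (γ s).1 * (deriv γ s).2))) = F L - F 0 := by
    exact intervalIntegral.integral_eq_sub_of_hasDerivAt (fun x _ => hF x)
      (hFcont.intervalIntegrable 0 L)
  have hFL : F L = F 0 := by
    have h1 : γ L = γ 0 := by simpa using hper 0
    have h2 : deriv γ L = deriv γ 0 := by
      have h3 : deriv (fun s => γ (s + L)) 0 = deriv γ 0 := by
        congr 1; funext s; rw [hper]
      rw [← h3, deriv_comp_add_const, zero_add]
    simp [hFdef, h1, h2]
  rw [hFL, sub_self] at hint
  have heq : ∀ s : ℝ, ((γ s).1 ^ 2 + (γ s).2 ^ 2) * κ s * deriv θ s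
      = κ s * ((γ s).1 * (deriv γ s).2 - (γ s).2 * (deriv γ s).1) := by
    intro s
    have h := hθ s
    have hxd : HasDerivAt (fun u => (γ u).1) ((deriv γ s).1) s := (hdγ s).hasDerivAt.fst
    have hyd : HasDerivAt (fun u => (γ u).2) ((deriv γ s).2) s := (hdγ s).hasDerivAt.snd
    have hx : deriv (fun u => (γ u).1) s = (deriv γ s).1 := hxd.deriv
    have hy : deriv (fun u => (γ u).2) s = (deriv γ s).2 := hyd.deriv
    rw [hx, hy] at h
    calc ((γ s).1 ^ 2 + (γ s).2 ^ 2) * κ s * deriv θ s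
        = κ s * (((γ s).1 ^ 2 + (γ s).2 ^ 2) * deriv θ s) := by ring
      _ = _ := by rw [h]
  have : (∫ s in (0:ℝ)..L, ((γ s).1 ^ 2 + (γ s).2 ^ 2) * κ s * deriv θ s)
      = ∫ s in (0:ℝ)..L, (1 - (1 + κ s * ((γ s).2 * (deriv γ s).1 - (γ s).1 * (deriv γ s).2))) := by
    congr 1; funext s; rw [heq s]; ring
  rw [this, intervalIntegral.integral_sub (intervalIntegrable_const)
    (hFcont.intervalIntegrable 0 L), hint, sub_zero,
    intervalIntegral.integral_const, smul_eq_mul, mul_one, sub_zero]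
end

section
/- In the hyperbolic plane of curvature −1, the geodesic curvature of a C² convex curve satisfies κ_g = (cosh r / cosh x) · (dω/ds), where s is hyperbolic arclength along the curve, r is the distance from the origin to the support (tangent) line, x is the distance from the foot of the perpendicular to the point of tangency along that line, and ω is the central angle of the foot of the perpendicular. -/
open Real

/-- Theorem 5.1 specialized to curvature `-1`: the geodesic curvature of a
`C²` strictly convex curve in `ℍ²` satisfies `κ_g = (cosh r / cosh x) dω/ds`.
Here the curve is written in geodesic polar coordinates `(ρ(s), θ(s))` about
the origin, parametrized by hyperbolic arclength `s`, with `α` the angle from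
the radial direction to the outward normal (so `dρ/ds = -sin α`,
`dθ/ds = cos α / sinh ρ`, and the geodesic curvature is
`κ_g = cos α cosh ρ / sinh ρ + dα/ds`); `r` is the distance from the origin to
the tangent line (`sinh r = sinh ρ cos α`), `x` the distance from the foot of
the perpendicular to the point of tangency (`cosh ρ = cosh r cosh x`), and `ω`
the central angle of the foot
(`cos(ω - θ) = tanh r / tanh ρ`, `sin(ω - θ) = sin α / cosh r`). -/
theorem geodesic_curvature_eq_cosh_ratio_omega_deriv
    (ρ θ α r x ω : ℝ → ℝ) (s₀ : ℝ)
    (hρd : Differentiable ℝ ρ) (hθd : Differentiable ℝ θ)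
    (hαd : Differentiable ℝ α) (hrd : Differentiable ℝ r)
    (hxd : Differentiable ℝ x) (hωd : Differentiable ℝ ω)
    (hρ : ∀ s, 0 < ρ s) (hr : ∀ s, 0 < r s) (hx : ∀ s, 0 < x s)
    (hα0 : ∀ s, 0 < α s) (hα1 : ∀ s, α s < π / 2)
    (hang : ∀ s, 0 < ω s - θ s) (hang' : ∀ s, ω s - θ s < π / 2)
    (hρ' : ∀ s, deriv ρ s = -Real.sin (α s))
    (hθ' : ∀ s, deriv θ s = Real.cos (α s) / Real.sinh (ρ s))
    (hsinh : ∀ s, Real.sinh (r s) = Real.sinh (ρ s) * Real.cos (α s))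
    (hcosh : ∀ s, Real.cosh (ρ s) = Real.cosh (r s) * Real.cosh (x s))
    (hcosω : ∀ s, Real.cos (ω s - θ s) = Real.tanh (r s) / Real.tanh (ρ s))
    (hsinω : ∀ s, Real.sin (ω s - θ s) = Real.sin (α s) / Real.cosh (r s)) :
    Real.cos (α s₀) * (Real.cosh (ρ s₀) / Real.sinh (ρ s₀)) + deriv α s₀
      = (Real.cosh (r s₀) / Real.cosh (x s₀)) * deriv ω s₀ := by
  have hCRpos : 0 < Real.cosh (r s₀) := Real.cosh_pos _
  have hCPpos : 0 < Real.cosh (ρ s₀) := Real.cosh_pos _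
  have hCXpos : 0 < Real.cosh (x s₀) := Real.cosh_pos _
  have hSPpos : 0 < Real.sinh (ρ s₀) := Real.sinh_pos_iff.mpr (hρ s₀)
  have hcpos : 0 < Real.cos (α s₀) :=
    Real.cos_pos_of_mem_Ioo ⟨by linarith [hα0 s₀, pi_div_two_pos], hα1 s₀⟩
  have hfun1 : (fun s => Real.sinh (r s)) = fun s => Real.sinh (ρ s) * Real.cos (α s) :=
    funext hsinh
  have h1 : HasDerivAt (fun s => Real.sinh (r s)) (Real.cosh (r s₀) * deriv r s₀) s₀ :=
    (hrd s₀).hasDerivAt.sinh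
  have h2 : HasDerivAt (fun s => Real.sinh (ρ s) * Real.cos (α s))
      ((Real.cosh (ρ s₀) * deriv ρ s₀) * Real.cos (α s₀)
        + Real.sinh (ρ s₀) * (-Real.sin (α s₀) * deriv α s₀)) s₀ :=
    ((hρd s₀).hasDerivAt.sinh).mul ((hαd s₀).hasDerivAt.cos)
  rw [← hfun1] at h2
  have E1 := h1.unique h2
  have hfun2 : (fun s => Real.sin (ω s - θ s)) = fun s => Real.sin (α s) / Real.cosh (r s) := by
    funext s; rw [hsinω s]
  have h3 : HasDerivAt (fun s => Real.sin (ω s - θ s))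
      (Real.cos (ω s₀ - θ s₀) * (deriv ω s₀ - deriv θ s₀)) s₀ :=
    ((hωd s₀).hasDerivAt.sub (hθd s₀).hasDerivAt).sin
  have h4 : HasDerivAt (fun s => Real.sin (α s) / Real.cosh (r s))
      ((Real.cos (α s₀) * deriv α s₀ * Real.cosh (r s₀)
        - Real.sin (α s₀) * (Real.sinh (r s₀) * deriv r s₀)) / Real.cosh (r s₀) ^ 2) s₀ :=
    ((hαd s₀).hasDerivAt.sin).div ((hrd s₀).hasDerivAt.cosh) hCRpos.ne'
  rw [← hfun2] at h4
  have E2 := h3.unique h4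
  -- cos W = cos α cosh ρ / cosh r
  have hcW : Real.cos (ω s₀ - θ s₀)
      = Real.cos (α s₀) * Real.cosh (ρ s₀) / Real.cosh (r s₀) := by
    rw [hcosω s₀, Real.tanh_eq_sinh_div_cosh, Real.tanh_eq_sinh_div_cosh, hsinh s₀]
    field_simp
  have hCR2 : Real.cosh (r s₀) ^ 2 = (Real.sinh (ρ s₀) * Real.cos (α s₀)) ^ 2 + 1 := by
    rw [← hsinh s₀]; exact Real.cosh_sq _
  have hCP2 : Real.cosh (ρ s₀) ^ 2 = Real.sinh (ρ s₀) ^ 2 + 1 := Real.cosh_sq _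
  have hsin2 : Real.sin (α s₀) ^ 2 = 1 - Real.cos (α s₀) ^ 2 := Real.sin_sq _
  have hCX : Real.cosh (x s₀) = Real.cosh (ρ s₀) / Real.cosh (r s₀) := by
    have := hcosh s₀; field_simp; linarith
  rw [hρ' s₀] at E1
  rw [hθ' s₀, hcW] at E2
  -- solve for deriv r s₀
  have hr' : deriv r s₀ = -(Real.sin (α s₀) * (Real.cosh (ρ s₀) * Real.cos (α s₀)
      + Real.sinh (ρ s₀) * deriv α s₀)) / Real.cosh (r s₀) := by
    field_simp
    linarith [E1]
  rw [hr', hsinh s₀] at E2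
  have hne : Real.cos (α s₀) * Real.cosh (ρ s₀) / Real.cosh (r s₀) ≠ 0 := by positivity
  have hstep : deriv ω s₀ - Real.cos (α s₀) / Real.sinh (ρ s₀)
      = (deriv α s₀ * Real.cosh (ρ s₀)
        + Real.sin (α s₀) ^ 2 * Real.cos (α s₀) * Real.sinh (ρ s₀)) / Real.cosh (r s₀) ^ 2 := by
    apply mul_left_cancel₀ hne
    rw [E2]
    field_simp
    linear_combination (deriv α s₀) * hCR2
      + (deriv α s₀ * Real.sinh (ρ s₀) ^ 2) * hsin2
      - (deriv α s₀) * hCP2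
  have hω' : deriv ω s₀ = Real.cos (α s₀) / Real.sinh (ρ s₀)
      + (deriv α s₀ * Real.cosh (ρ s₀)
        + Real.sin (α s₀) ^ 2 * Real.cos (α s₀) * Real.sinh (ρ s₀)) / Real.cosh (r s₀) ^ 2 := by
    linarith [hstep]
  rw [hω', hCX]
  field_simp
  linear_combination (Real.cos (α s₀)) * hCP2
    - (Real.cos (α s₀)) * hCR2
    - (Real.cos (α s₀) * Real.sinh (ρ s₀) ^ 2) * hsin2
end

section
/- In the hyperbolic plane of curvature −1, along the boundary of a C² strictly convex body, dφ/dω = 1 − tanh x, where φ is the central angle of the 'right' ideal endpoint of the tangent line, ω the central angle of the foot of the perpendicular from the origin to the tangent line, and x the distance from the foot to the point of tangency. -/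
open Real

lemma hasDerivAt_tanh' (y : ℝ) : HasDerivAt Real.tanh (1 / Real.cosh y ^ 2) y := by
  have h : HasDerivAt (fun t => Real.sinh t / Real.cosh t)
      ((Real.cosh y * Real.cosh y - Real.sinh y * Real.sinh y) / Real.cosh y ^ 2) y :=
    (Real.hasDerivAt_sinh y).div (Real.hasDerivAt_cosh y) (ne_of_gt (Real.cosh_pos y))
  have : (Real.cosh y * Real.cosh y - Real.sinh y * Real.sinh y) = 1 := by
    have := Real.cosh_sq_sub_sinh_sq y; nlinarith
  rw [this] at h
  have key : Real.tanh = fun t => Real.sinh t / Real.cosh t :=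
    funext Real.tanh_eq_sinh_div_cosh
  rw [key]; exact h

/-- The relation `dφ/dω = 1 - tanh x` of §6 (curvature `-1`): if `φ(ω)` is the
central angle of the "right" ideal endpoint of the tangent line, so that
`ω - φ` is the angle of parallelism for the distance `r(ω)` to the tangent
line, i.e. `cos(ω - φ) = tanh r` with `0 < ω - φ < π/2`, and `r` satisfies
`dr/dω = -cosh r · tanh x` (the Lemma of §5), then `dφ/dω = 1 - tanh x`. -/
theorem phi_deriv_eq_one_sub_tanh (r x φ : ℝ → ℝ) (ω₀ : ℝ)
    (hrd : Differentiable ℝ r) (hφd : Differentiable ℝ φ)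
    (hr : ∀ ω, 0 < r ω)
    (hang : ∀ ω, 0 < ω - φ ω) (hang' : ∀ ω, ω - φ ω < π / 2)
    (hpar : ∀ ω, Real.cos (ω - φ ω) = Real.tanh (r ω))
    (hr' : ∀ ω, deriv r ω = -(Real.cosh (r ω) * Real.tanh (x ω))) :
    deriv φ ω₀ = 1 - Real.tanh (x ω₀) := by
  set θ := ω₀ - φ ω₀ with hθ
  have hcosh := Real.cosh_pos (r ω₀)
  -- derivative of LHS
  have h1 : HasDerivAt (fun ω => Real.cos (ω - φ ω))
      (-Real.sin θ * (1 - deriv φ ω₀)) ω₀ := by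
    have hsub : HasDerivAt (fun ω => ω - φ ω) (1 - deriv φ ω₀) ω₀ :=
      (hasDerivAt_id ω₀).sub (hφd ω₀).hasDerivAt
    exact (Real.hasDerivAt_cos θ).comp ω₀ hsub
  -- derivative of RHS
  have h2 : HasDerivAt (fun ω => Real.tanh (r ω))
      (1 / Real.cosh (r ω₀) ^ 2 * deriv r ω₀) ω₀ :=
    (hasDerivAt_tanh' (r ω₀)).comp ω₀ (hrd ω₀).hasDerivAt
  have heq : (fun ω => Real.cos (ω - φ ω)) = fun ω => Real.tanh (r ω) := by
    funext ω; exact hpar ω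
  rw [heq] at h1
  have hder : -Real.sin θ * (1 - deriv φ ω₀)
      = 1 / Real.cosh (r ω₀) ^ 2 * deriv r ω₀ := h1.unique h2
  -- sin θ = 1 / cosh (r ω₀)
  have hsin : Real.sin θ = 1 / Real.cosh (r ω₀) := by
    have hθ0 : 0 < θ := hang ω₀
    have hθπ : θ < π / 2 := hang' ω₀
    have hsinpos : 0 < Real.sin θ := Real.sin_pos_of_pos_of_lt_pi hθ0
      (lt_trans hθπ (by linarith [Real.pi_pos]))
    have hcos : Real.cos θ = Real.tanh (r ω₀) := hpar ω₀
    have hsq : Real.sin θ ^ 2 = (1 / Real.cosh (r ω₀)) ^ 2 := by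
      have h1 : Real.sin θ ^ 2 = 1 - Real.cos θ ^ 2 := by
        have := Real.sin_sq_add_cos_sq θ; linarith
      rw [h1, hcos, Real.tanh_eq_sinh_div_cosh]
      have hc := Real.cosh_sq_sub_sinh_sq (r ω₀)
      field_simp
      exact hc
    have h2 : Real.sin θ = Real.sqrt (Real.sin θ ^ 2) :=
      (Real.sqrt_sq hsinpos.le).symm
    rw [h2, hsq, Real.sqrt_sq (by positivity)]
  rw [hsin, hr'] at hder
  have hc2 : Real.cosh (r ω₀) ^ 2 > 0 := by positivity
  field_simp at hder
  nlinarith [hder]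
end
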